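/- Let X = (X⁺,X⁻) ∈ L with X⁺ ≠ 0 and X⁻ ≠ 0, let k ∈ {1,…,d}, and let z be a natural number with 1 ≤ z < min{B_X(1), S_X(d)}. Let X' = C(X⁺, X⁻ + z·e_k) be the state obtained by clearing after the arrival of a limit sell order of size z at price k. Then X' ∈ L and: (a) if a(X) ≤ k, then X' = (X⁺, X⁻ + z·e_k), b(X') = b(X) and a(X') = a(X); (b) if b(X) < k < a(X), then X' = (X⁺, X⁻ + z·e_k), b(X') = b(X) and a(X') = k; (c) if B_X⁻¹(z) < k ≤ b(X), then X' = (τ_{k−1}(X⁺), X⁻ + (z − B_X(k))·e_k), b(X') = B_X⁻¹(B_X(k)+1) and a(X') = k; (d) if k ≤ B_X⁻¹(z), then X' = (τ_{B_X⁻¹(z)−1}(X⁺) + (B_X(B_X⁻¹(z)) − z)·e_{B_X⁻¹(z)}, X⁻), b(X') = B_X⁻¹(z+1) and a(X') = a(X). -/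

import Mathlib

open scoped BigOperators

namespace OB

/-- The space of order configurations `E = ℕ^d × ℕ^d`: buy side and sell side. -/
abbrev E (d : ℕ) := (Fin d → ℕ) × (Fin d → ℕ)

/-- Price support of a vector: the set of prices `j ∈ {1,…,d}` with a positive queue. -/
def supp {d : ℕ} (Z : Fin d → ℕ) : Finset ℕ :=
  (Finset.univ.filter fun j : Fin d => 0 < Z j).image fun j : Fin d => (j : ℕ) + 1

/-- `sup supp`, with the convention `sup ∅ = 0`. -/
def supSupp {d : ℕ} (Z : Fin d → ℕ) : ℕ := (supp Z).sup id

/-- `inf supp`, with the convention `inf ∅ = d+1`. -/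
def infSupp {d : ℕ} (Z : Fin d → ℕ) : ℕ :=
  if h : (supp Z).Nonempty then (supp Z).min' h else d + 1

/-- bid price `b(X) = sup supp(X⁺)`. -/
def bid {d : ℕ} (X : E d) : ℕ := supSupp X.1

/-- ask price `a(X) = inf supp(X⁻)`. -/
def ask {d : ℕ} (X : E d) : ℕ := infSupp X.2

/-- Admissible limit order book configurations: `a(X) > b(X)`. -/
def Lset (d : ℕ) : Set (E d) := {X | bid X < ask X}

/-- Entry of a vector at price `i` (prices run from 1 to d; 0 outside this range). -/
def ent {d : ℕ} (z : Fin d → ℕ) (i : ℕ) : ℕ :=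
  if h : 1 ≤ i ∧ i ≤ d then z ⟨i - 1, by omega⟩ else 0

/-- Standard basis vector at price `i`. -/
def e {d : ℕ} (i : ℕ) : Fin d → ℕ := fun j => if (j : ℕ) + 1 = i then 1 else 0

/-- `τ_i`: zero out all entries at prices `> i`. -/
def tauLow {d : ℕ} (i : ℤ) (z : Fin d → ℕ) : Fin d → ℕ :=
  fun j => if ((j : ℕ) + 1 : ℤ) ≤ i then z j else 0

/-- `τ^i`: zero out all entries at prices `< i`. -/
def tauHigh {d : ℕ} (i : ℤ) (z : Fin d → ℕ) : Fin d → ℕ :=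
  fun j => if i ≤ ((j : ℕ) + 1 : ℤ) then z j else 0

/-- `B_X(k) = Σ_{i ≥ k} X⁺_i`. -/
def BX {d : ℕ} (X : E d) (k : ℕ) : ℕ := ∑ j : Fin d, if k ≤ (j : ℕ) + 1 then X.1 j else 0

/-- `S_X(k) = Σ_{i ≤ k} X⁻_i`. -/
def SX {d : ℕ} (X : E d) (k : ℕ) : ℕ := ∑ j : Fin d, if (j : ℕ) + 1 ≤ k then X.2 j else 0

/-- `g_X(k) = S_X(k) − B_X(k)`. -/
def gX {d : ℕ} (X : E d) (k : ℕ) : ℤ := (SX X k : ℤ) - (BX X k : ℤ)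

/-- `p_A(X) = inf{k ∈ {1,…,d} : g_X(k) > 0}`, convention `inf ∅ = d+1`. -/
def pA {d : ℕ} (X : E d) : ℕ :=
  if h : ((Finset.Icc 1 d).filter fun k => 0 < gX X k).Nonempty
  then ((Finset.Icc 1 d).filter fun k => 0 < gX X k).min' h else d + 1

/-- `p_B(X) = sup{k ∈ {1,…,d} : g_X(k) < 0}`, convention `sup ∅ = 0`. -/
def pB {d : ℕ} (X : E d) : ℕ :=
  ((Finset.Icc 1 d).filter fun k => gX X k < 0).sup id

/-- `B_X⁻¹(z) = sup{i ∈ {1,…,d} : B_X(i) ≥ z}`, convention `sup ∅ = 0`. -/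
def Binv {d : ℕ} (X : E d) (z : ℕ) : ℕ :=
  ((Finset.Icc 1 d).filter fun i => z ≤ BX X i).sup id

/-- `S_X⁻¹(z) = inf{i ∈ {1,…,d} : S_X(i) ≥ z}`, convention `inf ∅ = d+1`. -/
def Sinv {d : ℕ} (X : E d) (z : ℕ) : ℕ :=
  if h : ((Finset.Icc 1 d).filter fun i => z ≤ SX X i).Nonempty
  then ((Finset.Icc 1 d).filter fun i => z ≤ SX X i).min' h else d + 1

/-- Buy side after order-matching clearing (Eq. (11) of the paper):
`C(X)⁺ = τ_{p_B}(X⁺)` if `g_X(p_B) ≤ −X⁺_{p_B}`, and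
`C(X)⁺ = τ_{p_B−1}(X⁺) − min{0, g_X(p_B)}·e_{p_B}` otherwise. -/
def clearPlus {d : ℕ} (X : E d) : Fin d → ℕ :=
  if gX X (pB X) ≤ -(ent X.1 (pB X) : ℤ) then tauLow (pB X : ℤ) X.1
  else fun j => tauLow ((pB X : ℤ) - 1) X.1 j + (max 0 (-(gX X (pB X)))).toNat * e (pB X) j

/-- Sell side after order-matching clearing (Eq. (12) of the paper):
`C(X)⁻ = τ^{p_A}(X⁻)` if `g_X(p_A) ≥ X⁻_{p_A}`, and
`C(X)⁻ = τ^{p_A+1}(X⁻) + max{0, g_X(p_A)}·e_{p_A}` otherwise. -/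
def clearMinus {d : ℕ} (X : E d) : Fin d → ℕ :=
  if (ent X.2 (pA X) : ℤ) ≤ gX X (pA X) then tauHigh (pA X : ℤ) X.2
  else fun j => tauHigh ((pA X : ℤ) + 1) X.2 j + (max 0 (gX X (pA X))).toNat * e (pA X) j

/-- The order-matching clearing operator. -/
def clear {d : ℕ} (X : E d) : E d := (clearPlus X, clearMinus X)

/-- Price support of an integer-valued vector. -/
def suppZ {d : ℕ} (W : Fin d → ℤ) : Finset ℕ :=
  (Finset.univ.filter fun j : Fin d => 0 < W j).image fun j : Fin d => (j : ℕ) + 1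

/-- `sup supp` of an integer-valued vector, convention `sup ∅ = 0`. -/
def supSuppZ {d : ℕ} (W : Fin d → ℤ) : ℕ := (suppZ W).sup id

/-- `inf supp` of an integer-valued vector, convention `inf ∅ = d+1`. -/
def infSuppZ {d : ℕ} (W : Fin d → ℤ) : ℕ :=
  if h : (suppZ W).Nonempty then (suppZ W).min' h else d + 1

/-- `D : E → E` is an order-matching clearing operator: it maps into `L`, its fixed
points are exactly `L`, and, with `Z(X) = X − D(X)` (computed in `ℤ^d × ℤ^d`), the
conditions (A1)–(A4) of Definition 2.2 hold. -/
def IsOrderMatchingClearing {d : ℕ} (D : E d → E d) : Prop :=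
  (∀ X : E d, D X ∈ Lset d) ∧
  (∀ X : E d, X ∈ Lset d ↔ D X = X) ∧
  (∀ X : E d,
    -- (A1): the executed orders `Z(X) = X − D(X)` have nonnegative entries
    (∀ j, (D X).1 j ≤ X.1 j ∧ (D X).2 j ≤ X.2 j) ∧
    -- (A2): `|Z(X)⁺| = |Z(X)⁻|`
    (∑ j, ((X.1 j : ℤ) - ((D X).1 j : ℤ))) = (∑ j, ((X.2 j : ℤ) - ((D X).2 j : ℤ))) ∧
    -- (A3): `sup supp(Z(X)⁻) ≤ inf supp(Z(X)⁺)`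
    supSuppZ (fun j => (X.2 j : ℤ) - ((D X).2 j : ℤ)) ≤
      infSuppZ (fun j => (X.1 j : ℤ) - ((D X).1 j : ℤ)) ∧
    -- (A4): `sup supp(Z(X)⁻) ≤ inf supp(D(X)⁻)` and `inf supp(Z(X)⁺) ≥ sup supp(D(X)⁺)`
    supSuppZ (fun j => (X.2 j : ℤ) - ((D X).2 j : ℤ)) ≤ infSupp (D X).2 ∧
    supSupp (D X).1 ≤ infSuppZ (fun j => (X.1 j : ℤ) - ((D X).1 j : ℤ)))


variable {d : ℕ}

lemma mem_supp_iff {Z : Fin d → ℕ} {m : ℕ} :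
    m ∈ supp Z ↔ ∃ j : Fin d, 0 < Z j ∧ (j : ℕ) + 1 = m := by
  simp [supp]

lemma sup_id_mem (s : Finset ℕ) (h : s.Nonempty) : s.sup id ∈ s := by
  have : s.sup id = s.max' h := by rw [Finset.max'_eq_sup', Finset.sup'_eq_sup]
  rw [this]; exact s.max'_mem h

lemma supSupp_le_d {Z : Fin d → ℕ} : supSupp Z ≤ d :=
  Finset.sup_le fun m hm => by
    obtain ⟨j, _, rfl⟩ := mem_supp_iff.mp hm
    have := j.isLt; simp only [id]; omega

lemma apply_eq_zero_of_supSupp_lt {Z : Fin d → ℕ} {j : Fin d}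
    (h : supSupp Z < (j:ℕ)+1) : Z j = 0 := by
  by_contra hc
  have hmem : (j:ℕ)+1 ∈ supp Z := mem_supp_iff.mpr ⟨j, Nat.pos_of_ne_zero hc, rfl⟩
  have h2 : (j:ℕ)+1 ≤ supSupp Z := Finset.le_sup (f := id) hmem
  omega

lemma one_le_supSupp {Z : Fin d → ℕ} (h : Z ≠ 0) : 1 ≤ supSupp Z := by
  obtain ⟨j, hj⟩ := Function.ne_iff.mp h
  have hmem : (j:ℕ)+1 ∈ supp Z :=
    mem_supp_iff.mpr ⟨j, Nat.pos_of_ne_zero (by simpa using hj), rfl⟩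
  have h2 : (j:ℕ)+1 ≤ supSupp Z := Finset.le_sup (f := id) hmem
  omega

lemma supSupp_eq {Z : Fin d → ℕ} {m : ℕ} (hpos : ∃ j : Fin d, 0 < Z j ∧ (j:ℕ)+1 = m)
    (hz : ∀ j : Fin d, m ≤ (j:ℕ) → Z j = 0) : supSupp Z = m := by
  obtain ⟨j0, hj0, hj0m⟩ := hpos
  subst hj0m
  apply le_antisymm
  · apply Finset.sup_le
    intro i hi
    obtain ⟨j, hj, rfl⟩ := mem_supp_iff.mp hi
    simp only [id]
    by_contra hc
    have := hz j (by omega)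
    omega
  · exact Finset.le_sup (f := id) (mem_supp_iff.mpr ⟨j0, hj0, rfl⟩)

lemma one_le_infSupp {Z : Fin d → ℕ} : 1 ≤ infSupp Z := by
  rw [infSupp]; split
  · next h => obtain ⟨j, _, hj⟩ := mem_supp_iff.mp ((supp Z).min'_mem h); omega
  · omega

lemma infSupp_le_d {Z : Fin d → ℕ} (h : Z ≠ 0) : infSupp Z ≤ d := by
  have hne : (supp Z).Nonempty := by
    obtain ⟨j, hj⟩ := Function.ne_iff.mp h
    exact ⟨(j:ℕ)+1, mem_supp_iff.mpr ⟨j, Nat.pos_of_ne_zero (by simpa using hj), rfl⟩⟩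
  rw [infSupp, dif_pos hne]
  obtain ⟨j, _, hj⟩ := mem_supp_iff.mp ((supp Z).min'_mem hne)
  have := j.isLt; omega

lemma apply_eq_zero_of_lt_infSupp {Z : Fin d → ℕ} {j : Fin d}
    (h : (j:ℕ)+1 < infSupp Z) : Z j = 0 := by
  by_contra hc
  have hmem : (j:ℕ)+1 ∈ supp Z := mem_supp_iff.mpr ⟨j, Nat.pos_of_ne_zero hc, rfl⟩
  rw [infSupp, dif_pos ⟨_, hmem⟩] at h
  exact absurd (Finset.min'_le _ _ hmem) (by omega)

lemma infSupp_eq {Z : Fin d → ℕ} {m : ℕ} (hpos : ∃ j : Fin d, 0 < Z j ∧ (j:ℕ)+1 = m)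
    (hz : ∀ j : Fin d, (j:ℕ)+1 < m → Z j = 0) : infSupp Z = m := by
  obtain ⟨j0, hj0, hj0m⟩ := hpos
  subst hj0m
  have hmem : (j0:ℕ)+1 ∈ supp Z := mem_supp_iff.mpr ⟨j0, hj0, rfl⟩
  rw [infSupp, dif_pos ⟨_, hmem⟩]
  apply le_antisymm (Finset.min'_le _ _ hmem)
  apply Finset.le_min'
  intro y hy
  obtain ⟨j, hj, rfl⟩ := mem_supp_iff.mp hy
  by_contra hc
  have := hz j (by omega)
  omega

lemma exists_supSupp {Z : Fin d → ℕ} (h : 1 ≤ supSupp Z) :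
    ∃ j : Fin d, 0 < Z j ∧ (j:ℕ)+1 = supSupp Z := by
  have hne : (supp Z).Nonempty := by
    by_contra hc
    rw [Finset.not_nonempty_iff_eq_empty] at hc
    have h0 : supSupp Z = 0 := by rw [supSupp, hc]; rfl
    omega
  exact mem_supp_iff.mp (sup_id_mem _ hne)

lemma exists_infSupp {Z : Fin d → ℕ} (h : infSupp Z ≤ d) :
    ∃ j : Fin d, 0 < Z j ∧ (j:ℕ)+1 = infSupp Z := by
  rcases (supp Z).eq_empty_or_nonempty with hc | hne
  · exfalso; rw [infSupp, dif_neg (by simp [hc])] at h; omega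
  · rw [infSupp, dif_pos hne]; exact mem_supp_iff.mp ((supp Z).min'_mem hne)

lemma tauLow_eq_self {Z : Fin d → ℕ} {i : ℤ} (h : (supSupp Z : ℤ) ≤ i) : tauLow i Z = Z := by
  funext j; rw [tauLow]; split_ifs with hj
  · rfl
  · exact (apply_eq_zero_of_supSupp_lt (by omega)).symm

lemma tauHigh_eq_self {Z : Fin d → ℕ} {i : ℤ} (h : i ≤ (infSupp Z : ℤ)) : tauHigh i Z = Z := by
  funext j; rw [tauHigh]; split_ifs with hj
  · rfl
  · exact (apply_eq_zero_of_lt_infSupp (by omega)).symm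

lemma BX_antitone {X : E d} {m m' : ℕ} (h : m ≤ m') : BX X m' ≤ BX X m :=
  Finset.sum_le_sum fun j _ => by split_ifs <;> omega

lemma SX_monotone {X : E d} {m m' : ℕ} (h : m ≤ m') : SX X m ≤ SX X m' :=
  Finset.sum_le_sum fun j _ => by split_ifs <;> omega

lemma BX_eq_zero_of_gt {X : E d} {m : ℕ} (h : d < m) : BX X m = 0 :=
  Finset.sum_eq_zero fun j _ => by rw [if_neg]; have := j.isLt; omega

lemma BX_eq_zero {X : E d} {m : ℕ} (h : bid X < m) : BX X m = 0 := by
  have h' : supSupp X.1 < m := h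
  exact Finset.sum_eq_zero fun j _ => by
    split_ifs with hj
    · exact apply_eq_zero_of_supSupp_lt (by omega)
    · rfl

lemma SX_eq_zero {X : E d} {m : ℕ} (h : m < ask X) : SX X m = 0 := by
  have h' : m < infSupp X.2 := h
  exact Finset.sum_eq_zero fun j _ => by
    split_ifs with hj
    · exact apply_eq_zero_of_lt_infSupp (by omega)
    · rfl

lemma BX_pos {X : E d} {m : ℕ} (hb : 1 ≤ bid X) (h : m ≤ bid X) : 0 < BX X m := by
  have h' : m ≤ supSupp X.1 := h
  obtain ⟨j, hj, hjm⟩ := exists_supSupp (Z := X.1) hb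
  have hle := Finset.single_le_sum
    (f := fun j : Fin d => if m ≤ (j:ℕ)+1 then X.1 j else 0)
    (fun i _ => Nat.zero_le _) (Finset.mem_univ j)
  have hle' : (if m ≤ (j:ℕ)+1 then X.1 j else 0) ≤ BX X m := hle
  rw [if_pos (by omega)] at hle'
  exact lt_of_lt_of_le hj hle'

lemma SX_pos {X : E d} {m : ℕ} (ha : ask X ≤ d) (h : ask X ≤ m) : 0 < SX X m := by
  have h' : infSupp X.2 ≤ m := h
  obtain ⟨j, hj, hjm⟩ := exists_infSupp (Z := X.2) ha
  have hle := Finset.single_le_sum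
    (f := fun j : Fin d => if (j:ℕ)+1 ≤ m then X.2 j else 0)
    (fun i _ => Nat.zero_le _) (Finset.mem_univ j)
  have hle' : (if (j:ℕ)+1 ≤ m then X.2 j else 0) ≤ SX X m := hle
  rw [if_pos (by omega)] at hle'
  exact lt_of_lt_of_le hj hle'

lemma ent_eq {w : Fin d → ℕ} {m : ℕ} (h1 : 1 ≤ m) (h2 : m ≤ d) :
    ent w m = w ⟨m - 1, by omega⟩ := dif_pos ⟨h1, h2⟩

lemma ent_le_BX {X : E d} {m : ℕ} (h1 : 1 ≤ m) (h2 : m ≤ d) : ent X.1 m ≤ BX X m := by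
  rw [ent_eq h1 h2]
  have hle := Finset.single_le_sum
    (f := fun j : Fin d => if m ≤ (j:ℕ)+1 then X.1 j else 0)
    (fun i _ => Nat.zero_le _) (Finset.mem_univ (⟨m - 1, by omega⟩ : Fin d))
  have hle' : (if m ≤ (m-1)+1 then X.1 ⟨m - 1, by omega⟩ else 0) ≤ BX X m := hle
  rw [if_pos (by omega)] at hle'
  exact hle'

lemma ent_le_SX {X : E d} {m : ℕ} (h1 : 1 ≤ m) (h2 : m ≤ d) : ent X.2 m ≤ SX X m := by
  rw [ent_eq h1 h2]
  have hle := Finset.single_le_sum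
    (f := fun j : Fin d => if (j:ℕ)+1 ≤ m then X.2 j else 0)
    (fun i _ => Nat.zero_le _) (Finset.mem_univ (⟨m - 1, by omega⟩ : Fin d))
  have hle' : (if (m-1)+1 ≤ m then X.2 ⟨m - 1, by omega⟩ else 0) ≤ SX X m := hle
  rw [if_pos (by omega)] at hle'
  exact hle'

lemma BX_rec {X : E d} {m : ℕ} (h1 : 1 ≤ m) (h2 : m ≤ d) :
    BX X m = X.1 ⟨m - 1, by omega⟩ + BX X (m + 1) := by
  have key : ∀ j : Fin d, (if m ≤ (j:ℕ)+1 then X.1 j else 0)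
      = (if (j:ℕ) = m - 1 then X.1 j else 0) + (if m + 1 ≤ (j:ℕ)+1 then X.1 j else 0) := by
    intro j; split_ifs <;> omega
  rw [BX, Finset.sum_congr rfl fun j _ => key j, Finset.sum_add_distrib]
  congr 1
  rw [Finset.sum_eq_single_of_mem (⟨m - 1, by omega⟩ : Fin d) (Finset.mem_univ _)
      (fun j _ hj => if_neg fun hc => hj (Fin.ext hc))]
  simp

lemma Binv_le_d {X : E d} {z : ℕ} : Binv X z ≤ d :=
  Finset.sup_le fun i hi => by
    have := (Finset.mem_Icc.mp (Finset.mem_filter.mp hi).1).2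
    simpa using this

lemma le_Binv {X : E d} {z i : ℕ} (h1 : 1 ≤ i) (h2 : i ≤ d) (h : z ≤ BX X i) :
    i ≤ Binv X z :=
  Finset.le_sup (f := id) (Finset.mem_filter.mpr ⟨Finset.mem_Icc.mpr ⟨h1, h2⟩, h⟩)

lemma Binv_mem {X : E d} {z : ℕ} (h : 1 ≤ Binv X z) : z ≤ BX X (Binv X z) := by
  have hne : ((Finset.Icc 1 d).filter fun i => z ≤ BX X i).Nonempty := by
    by_contra hc
    rw [Finset.not_nonempty_iff_eq_empty] at hc
    rw [Binv, hc] at h; simp at h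
  exact (Finset.mem_filter.mp (sup_id_mem _ hne)).2

lemma BX_lt_of_Binv_lt {X : E d} {z i : ℕ} (hz : 1 ≤ z) (h : Binv X z < i) : BX X i < z := by
  by_contra hc; push_neg at hc
  rcases le_or_gt i d with hid | hid
  · exact absurd (le_Binv (by omega) hid hc) (by omega)
  · rw [BX_eq_zero_of_gt hid] at hc; omega

lemma Binv_eq {X : E d} {z q : ℕ} (h1 : 1 ≤ q) (h2 : q ≤ d) (hq : z ≤ BX X q)
    (hmax : ∀ i, q < i → i ≤ d → BX X i < z) : Binv X z = q := by
  apply le_antisymm _ (le_Binv h1 h2 hq)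
  apply Finset.sup_le
  intro i hi
  obtain ⟨hIcc, hBi⟩ := Finset.mem_filter.mp hi
  obtain ⟨hi1, hid⟩ := Finset.mem_Icc.mp hIcc
  simp only [id]
  by_contra hc; push_neg at hc
  have := hmax i (by omega) hid; omega

lemma Binv_anti {X : E d} {z z' : ℕ} (h : z ≤ z') : Binv X z' ≤ Binv X z := by
  apply Finset.sup_mono
  intro x hx
  rw [Finset.mem_filter] at *
  exact ⟨hx.1, le_trans h hx.2⟩

lemma pB_eq {X : E d} {m : ℕ} (h1 : 1 ≤ m) (h2 : m ≤ d) (hneg : gX X m < 0)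
    (hmax : ∀ i, m < i → i ≤ d → ¬ gX X i < 0) : pB X = m := by
  apply le_antisymm
  · apply Finset.sup_le
    intro i hi
    obtain ⟨hIcc, hg⟩ := Finset.mem_filter.mp hi
    obtain ⟨_, hid⟩ := Finset.mem_Icc.mp hIcc
    simp only [id]
    by_contra hc; push_neg at hc
    exact hmax i (by omega) hid hg
  · exact Finset.le_sup (f := id) (Finset.mem_filter.mpr ⟨Finset.mem_Icc.mpr ⟨h1, h2⟩, hneg⟩)

lemma pA_eq {X : E d} {m : ℕ} (h1 : 1 ≤ m) (h2 : m ≤ d) (hpos : 0 < gX X m)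
    (hmin : ∀ i, 1 ≤ i → i < m → ¬ 0 < gX X i) : pA X = m := by
  have hmem : m ∈ (Finset.Icc 1 d).filter fun k => 0 < gX X k :=
    Finset.mem_filter.mpr ⟨Finset.mem_Icc.mpr ⟨h1, h2⟩, hpos⟩
  rw [pA, dif_pos ⟨m, hmem⟩]
  apply le_antisymm (Finset.min'_le _ _ hmem)
  apply Finset.le_min'
  intro y hy
  obtain ⟨hIcc, hg⟩ := Finset.mem_filter.mp hy
  obtain ⟨hy1, _⟩ := Finset.mem_Icc.mp hIcc
  by_contra hc; push_neg at hc
  exact hmin y hy1 (by omega) hg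

lemma SX_add_sell {X : E d} {k z : ℕ} (h1 : 1 ≤ k) (h2 : k ≤ d) (m : ℕ) :
    SX (X.1, X.2 + z • e k) m = SX X m + if k ≤ m then z else 0 := by
  have key : ∀ j : Fin d, (if (j:ℕ)+1 ≤ m then (X.2 + z • e k : Fin d → ℕ) j else 0)
      = (if (j:ℕ)+1 ≤ m then X.2 j else 0) + (if (j:ℕ) = k - 1 ∧ k ≤ m then z else 0) := by
    intro j
    simp only [Pi.add_apply, Pi.smul_apply, smul_eq_mul, e]
    split_ifs <;> omega
  rw [SX, Finset.sum_congr rfl fun j _ => key j, Finset.sum_add_distrib]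
  congr 1
  rw [Finset.sum_eq_single_of_mem (⟨k - 1, by omega⟩ : Fin d) (Finset.mem_univ _)
      (fun j _ hj => if_neg fun hc => hj (Fin.ext hc.1))]
  by_cases hkm : k ≤ m <;> simp [hkm]

lemma BX_rec' {X : E d} {m : ℕ} (h1 : 1 ≤ m) (h2 : m ≤ d) :
    BX X m = ent X.1 m + BX X (m + 1) := by
  rw [ent_eq h1 h2]; exact BX_rec h1 h2

lemma BX_rec_fin {X : E d} (j : Fin d) : BX X ((j:ℕ)+1) = X.1 j + BX X ((j:ℕ)+2) := by
  have h := BX_rec (X := X) (m := (j:ℕ)+1) (by omega) (by have := j.isLt; omega)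
  have hj : (⟨(j:ℕ)+1-1, by omega⟩ : Fin d) = j := by
    apply Fin.ext; simp
  rw [h, hj]

lemma ent_pos_witness {w : Fin d → ℕ} {m : ℕ} (h1 : 1 ≤ m) (h2 : m ≤ d) (h : 0 < ent w m) :
    ∃ j : Fin d, 0 < w j ∧ (j:ℕ)+1 = m :=
  ⟨⟨m-1, by omega⟩, by rwa [ent_eq h1 h2] at h, by show m-1+1 = m; omega⟩

/-- Proposition 2.5, Case 2: limit sell order of size `z` at price `k`. -/
theorem clear_limit_sell_order (d : ℕ) (hd : 1 ≤ d) (X : E d) (hX : X ∈ Lset d)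
    (hplus : X.1 ≠ 0) (hminus : X.2 ≠ 0) (k z : ℕ) (hk : k ∈ Finset.Icc 1 d)
    (hz1 : 1 ≤ z) (hz : z < min (BX X 1) (SX X d))
    (X' : E d) (hX' : X' = clear (X.1, X.2 + z • e k)) :
    X' ∈ Lset d ∧
    -- (a) `a(X) ≤ k`
    (ask X ≤ k →
      X' = (X.1, X.2 + z • e k) ∧ bid X' = bid X ∧ ask X' = ask X) ∧
    -- (b) `b(X) < k < a(X)`
    (bid X < k → k < ask X →
      X' = (X.1, X.2 + z • e k) ∧ bid X' = bid X ∧ ask X' = k) ∧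
    -- (c) `B_X⁻¹(z) < k ≤ b(X)`
    (Binv X z < k → k ≤ bid X →
      X' = (tauLow ((k : ℤ) - 1) X.1, X.2 + (z - BX X k) • e k) ∧
      bid X' = Binv X (BX X k + 1) ∧ ask X' = k) ∧
    -- (d) `k ≤ B_X⁻¹(z)`
    (k ≤ Binv X z →
      X' = (tauLow ((Binv X z : ℤ) - 1) X.1 + (BX X (Binv X z) - z) • e (Binv X z), X.2) ∧
      bid X' = Binv X (z + 1) ∧ ask X' = ask X) := by
  obtain ⟨k1, kd⟩ := Finset.mem_Icc.mp hk
  have hkd' : k - 1 < d := by omega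
  have hzB : z < BX X 1 := (lt_min_iff.mp hz).1
  have hzS : z < SX X d := (lt_min_iff.mp hz).2
  clear hz hk
  set Y : E d := (X.1, X.2 + z • e k) with hYdef
  have hY1 : Y.1 = X.1 := rfl
  have hY2 : ∀ j : Fin d, Y.2 j = X.2 j + z * (if (j:ℕ)+1 = k then 1 else 0) := by
    intro j
    show (X.2 + z • e k : Fin d → ℕ) j = _
    simp [e]
  have hY2' : ∀ j : Fin d, (X.2 + z • e k : Fin d → ℕ) j
      = X.2 j + z * (if (j:ℕ)+1 = k then 1 else 0) := fun j => hY2 j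
  have hb1 : 1 ≤ bid X := one_le_supSupp hplus
  have hbd : bid X ≤ d := supSupp_le_d
  have had : ask X ≤ d := infSupp_le_d hminus
  have ha1 : 1 ≤ ask X := one_le_infSupp
  have hba : bid X < ask X := hX
  have hBY : ∀ m, BX Y m = BX X m := fun _ => rfl
  have hSY : ∀ m, SX Y m = SX X m + if k ≤ m then z else 0 := fun m => SX_add_sell k1 kd m
  have hgY : ∀ m, gX Y m = gX X m + if k ≤ m then (z:ℤ) else 0 := by
    intro m
    rw [gX, gX, hSY m, hBY m]
    by_cases hkm : k ≤ m
    · rw [if_pos hkm, if_pos hkm]; push_cast; ring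
    · rw [if_neg hkm, if_neg hkm]; push_cast; ring
  have hgneg : ∀ m, m ≤ bid X → gX X m = -(BX X m : ℤ) := by
    intro m hm
    rw [gX, SX_eq_zero (lt_of_le_of_lt hm hba)]
    push_cast; ring
  have hBpos : ∀ m, m ≤ bid X → 0 < BX X m := fun m hm => BX_pos hb1 hm
  have hgmid : ∀ m, bid X < m → m < ask X → gX X m = 0 := by
    intro m h1 h2
    rw [gX, SX_eq_zero h2, BX_eq_zero h1]
    ring
  have hgpos : ∀ m, ask X ≤ m → 0 < gX X m := by
    intro m hm
    have h1 := SX_pos had hm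
    have h2 : BX X m = 0 := BX_eq_zero (by omega)
    rw [gX, h2]
    push_cast; omega
  have hgnonneg : ∀ m, bid X < m → 0 ≤ gX X m := by
    intro m h1
    rcases lt_or_ge m (ask X) with h2 | h2
    · rw [hgmid m h1 h2]
    · exact le_of_lt (hgpos m h2)
  have hgnonpos : ∀ m, m < ask X → gX X m ≤ 0 := by
    intro m hm
    rcases le_or_gt m (bid X) with h | h
    · rw [hgneg m h]
      have := hBpos m h; omega
    · rw [hgmid m h hm]
  have hX2zero : ∀ j : Fin d, (j:ℕ)+1 < ask X → X.2 j = 0 :=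
    fun j hj => apply_eq_zero_of_lt_infSupp hj
  have hX1zero : ∀ j : Fin d, bid X < (j:ℕ)+1 → X.1 j = 0 :=
    fun j hj => apply_eq_zero_of_supSupp_lt hj
  have hX'1 : X'.1 = clearPlus Y := by rw [hX']; rfl
  have hX'2 : X'.2 = clearMinus Y := by rw [hX']; rfl
  -- shared buy-side analysis for cases (a) and (b)
  have hsharedB : bid X < k → pB Y = bid X ∧ clearPlus Y = X.1 := by
    intro hbk
    have hpB : pB Y = bid X := by
      apply pB_eq hb1 hbd
      · rw [hgY, if_neg (by omega), hgneg _ le_rfl]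
        have := hBpos _ (le_refl (bid X)); omega
      · intro i h1i h2i
        rw [hgY]
        have h0 := hgnonneg i h1i
        split_ifs with h <;> omega
    refine ⟨hpB, ?_⟩
    have hcond : gX Y (pB Y) ≤ -(ent Y.1 (pB Y) : ℤ) := by
      rw [hpB, hgY, if_neg (by omega), hgneg _ le_rfl, hY1]
      have := ent_le_BX (X := X) hb1 hbd
      omega
    simp only [clearPlus]
    rw [if_pos hcond, hpB, hY1]
    exact tauLow_eq_self (le_of_eq rfl)
  -- CASE (a)
  have Ha : ask X ≤ k → X' = Y ∧ bid X' = bid X ∧ ask X' = ask X := by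
    intro hak
    have hbk : bid X < k := lt_of_lt_of_le hba hak
    obtain ⟨hpB, hCP⟩ := hsharedB hbk
    have hinf : infSupp Y.2 = ask X := by
      apply infSupp_eq
      · obtain ⟨j, hj, hja⟩ := exists_infSupp (Z := X.2) had
        exact ⟨j, by rw [hY2 j]; exact Nat.lt_of_lt_of_le hj (Nat.le_add_right _ _), hja⟩
      · intro j hj
        rw [hY2 j, hX2zero j hj, if_neg (by omega)]
        simp
    have hpA : pA Y = ask X := by
      apply pA_eq ha1 had
      · rw [hgY]
        have := hgpos _ (le_refl (ask X))
        split_ifs <;> omega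
      · intro i h1i h2i
        rw [hgY, if_neg (by omega)]
        have := hgnonpos i h2i; omega
    have hCM : clearMinus Y = Y.2 := by
      have hcond : (ent Y.2 (pA Y) : ℤ) ≤ gX Y (pA Y) := by
        rw [hpA, gX, hBY, BX_eq_zero hba]
        have hsle : ent Y.2 (ask X) ≤ SX Y (ask X) := ent_le_SX (X := Y) ha1 had
        have hee : ent (X.2 + z • e k) (ask X) = ent Y.2 (ask X) := rfl
        push_cast; omega
      simp only [clearMinus]
      rw [if_pos hcond, hpA]
      exact tauHigh_eq_self (le_of_eq (by rw [hinf]))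
    refine ⟨?_, ?_, ?_⟩
    · rw [hX']
      show (clearPlus Y, clearMinus Y) = Y
      rw [hCP, hCM, hYdef]
    · simp only [bid]; rw [hX'1, hCP]
    · simp only [ask]; rw [hX'2, hCM]; exact hinf
  -- CASE (b)
  have Hb : bid X < k → k < ask X → X' = Y ∧ bid X' = bid X ∧ ask X' = k := by
    intro hbk hka
    obtain ⟨hpB, hCP⟩ := hsharedB hbk
    have hwit : ∃ j : Fin d, 0 < Y.2 j ∧ (j:ℕ)+1 = k := by
      refine ⟨⟨k-1, hkd'⟩, ?_, by show k-1+1 = k; omega⟩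
      rw [hY2]
      split_ifs with hif
      · omega
      · exact absurd (show ((⟨k-1, hkd'⟩ : Fin d):ℕ)+1 = k by show k-1+1 = k; omega) hif
    have hinf : infSupp Y.2 = k := by
      apply infSupp_eq hwit
      intro j hj
      rw [hY2 j, if_neg (by omega), hX2zero j (by omega)]
      simp
    have hpA : pA Y = k := by
      apply pA_eq k1 kd
      · rw [hgY, if_pos le_rfl, hgmid k hbk hka]
        omega
      · intro i h1i h2i
        rw [hgY, if_neg (by omega)]
        have := hgnonpos i (by omega); omega
    have hCM : clearMinus Y = Y.2 := by
      have hcond : (ent Y.2 (pA Y) : ℤ) ≤ gX Y (pA Y) := by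
        have h1 : ent Y.2 k ≤ SX Y k := ent_le_SX (X := Y) k1 kd
        rw [hSY k, SX_eq_zero hka, if_pos le_rfl] at h1
        rw [hpA, gX, hBY k, hSY k, SX_eq_zero hka, BX_eq_zero hbk, if_pos le_rfl]
        have hee : ent (X.2 + z • e k) k = ent Y.2 k := rfl
        push_cast; omega
      simp only [clearMinus]
      rw [if_pos hcond, hpA]
      exact tauHigh_eq_self (le_of_eq (by rw [hinf]))
    refine ⟨?_, ?_, ?_⟩
    · rw [hX']
      show (clearPlus Y, clearMinus Y) = Y
      rw [hCP, hCM, hYdef]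
    · simp only [bid]; rw [hX'1, hCP]
    · simp only [ask]; rw [hX'2, hCM]; exact hinf
  -- CASE (c)
  have Hc : Binv X z < k → k ≤ bid X →
      X' = (tauLow ((k : ℤ) - 1) X.1, X.2 + (z - BX X k) • e k) ∧
      bid X' = Binv X (BX X k + 1) ∧ ask X' = k := by
    intro hBk hkb
    have hka : k < ask X := by omega
    have hBkz : BX X k < z := by
      by_contra hc; push_neg at hc
      exact absurd (le_Binv k1 kd hc) (by omega)
    have hk2 : 2 ≤ k := by
      have h1 : 1 ≤ Binv X z := le_Binv le_rfl hd (le_of_lt hzB)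
      omega
    have hpB : pB Y = k - 1 := by
      apply pB_eq (by omega) (by omega)
      · rw [hgY, if_neg (by omega), hgneg _ (by omega)]
        have := hBpos (k-1) (by omega); omega
      · intro i h1i h2i
        rw [hgY, if_pos (by omega)]
        rcases le_or_gt i (bid X) with hib | hib
        · rw [hgneg _ hib]
          have hmono : BX X i ≤ BX X k := BX_antitone (by omega)
          omega
        · have := hgnonneg i hib; omega
    have hpA : pA Y = k := by
      apply pA_eq k1 kd
      · rw [hgY, if_pos le_rfl, hgneg _ (by omega)]
        omega
      · intro i h1i h2i
        rw [hgY, if_neg (by omega)]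
        have := hgnonpos i (by omega); omega
    have hcondP : gX Y (pB Y) ≤ -(ent Y.1 (pB Y) : ℤ) := by
      rw [hpB, hgY, if_neg (by omega), hgneg _ (by omega), hY1]
      have := ent_le_BX (X := X) (m := k-1) (by omega) (by omega)
      omega
    have hCP : clearPlus Y = tauLow ((k:ℤ) - 1) X.1 := by
      simp only [clearPlus]
      rw [if_pos hcondP, hpB, hY1]
      have hcast : ((k - 1 : ℕ) : ℤ) = (k : ℤ) - 1 := by omega
      rw [hcast]
    have hentge : z ≤ ent Y.2 k := by
      rw [ent_eq k1 kd, hY2]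
      split_ifs with hif
      · omega
      · exact absurd (show ((⟨k-1, by omega⟩ : Fin d):ℕ)+1 = k by show k-1+1 = k; omega) hif
    have hcondM : ¬ ((ent Y.2 (pA Y) : ℤ) ≤ gX Y (pA Y)) := by
      rw [hpA, hgY, if_pos le_rfl, hgneg _ (by omega)]
      have hB := hBpos k (by omega)
      have hee : ent (X.2 + z • e k) k = ent Y.2 k := rfl
      push_neg
      omega
    have hCM : clearMinus Y = X.2 + (z - BX X k) • e k := by
      simp only [clearMinus]
      rw [if_neg hcondM, hpA]
      funext j
      simp only [Pi.add_apply, Pi.smul_apply, smul_eq_mul]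
      have hgk : gX Y k = (z:ℤ) - BX X k := by
        rw [hgY, if_pos le_rfl, hgneg _ (by omega)]; ring
      rw [hgk]
      have htn : (max 0 ((z:ℤ) - BX X k)).toNat = z - BX X k := by omega
      rw [htn]
      simp only [tauHigh]
      split_ifs with hj
      · rw [hY2 j, if_neg (by omega)]
        simp
      · rw [hX2zero j (by omega)]
    refine ⟨?_, ?_, ?_⟩
    · rw [hX']
      show (clearPlus Y, clearMinus Y) = _
      rw [hCP, hCM]
    · -- bid X' = Binv X (BX X k + 1)
      have hr'1 : 1 ≤ Binv X (BX X k + 1) := le_Binv le_rfl hd (by omega)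
      have hr'k : Binv X (BX X k + 1) < k := by
        by_contra hc; push_neg at hc
        have h1 := Binv_mem (X := X) (z := BX X k + 1) (by omega)
        have h2 : BX X (Binv X (BX X k + 1)) ≤ BX X k := BX_antitone hc
        omega
      have hr'B : BX X k + 1 ≤ BX X (Binv X (BX X k + 1)) := Binv_mem (X := X) (by omega)
      have hr'B1 : BX X (Binv X (BX X k + 1) + 1) ≤ BX X k := by
        have := BX_lt_of_Binv_lt (z := BX X k + 1) (by omega)
          (show Binv X (BX X k + 1) < Binv X (BX X k + 1) + 1 by omega)
        omega
      have hentpos : 0 < ent X.1 (Binv X (BX X k + 1)) := by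
        have hrec := BX_rec' (X := X) (m := Binv X (BX X k + 1)) hr'1 (by omega)
        omega
      simp only [bid]; rw [hX'1, hCP]
      apply supSupp_eq
      · obtain ⟨j, hjpos, hjr⟩ := ent_pos_witness hr'1 (by omega) hentpos
        refine ⟨j, ?_, hjr⟩
        simp only [tauLow]
        rw [if_pos (show (((j:ℕ):ℤ))+1 ≤ (k:ℤ)-1 by omega)]
        exact hjpos
      · intro j hj
        simp only [tauLow]
        split_ifs with hjk
        · have hj2 : (j:ℕ)+2 ≤ k := by omega
          have hrec := BX_rec_fin (X := X) j
          have hm1 := BX_lt_of_Binv_lt (z := BX X k + 1) (by omega)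
            (show Binv X (BX X k + 1) < (j:ℕ)+1 by omega)
          have hm2 : BX X k ≤ BX X ((j:ℕ)+2) := BX_antitone (by omega)
          omega
        · rfl
    · simp only [ask]; rw [hX'2, hCM]
      apply infSupp_eq
      · refine ⟨⟨k-1, hkd'⟩, ?_, by show k-1+1 = k; omega⟩
        simp only [Pi.add_apply, Pi.smul_apply, smul_eq_mul, e]
        split_ifs with hif
        · omega
        · exact absurd (show ((⟨k-1, hkd'⟩ : Fin d):ℕ)+1 = k by show k-1+1 = k; omega) hif
      · intro j hj
        simp only [Pi.add_apply, Pi.smul_apply, smul_eq_mul, e]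
        rw [hX2zero j (by omega), if_neg (by omega)]
        simp
  -- CASE (d)
  have Hd : k ≤ Binv X z →
      X' = (tauLow ((Binv X z : ℤ) - 1) X.1 + (BX X (Binv X z) - z) • e (Binv X z), X.2) ∧
      bid X' = Binv X (z + 1) ∧ ask X' = ask X := by
    intro hkq
    set q := Binv X z with hqdef
    set r := Binv X (z+1) with hrdef
    have hq1 : 1 ≤ q := le_trans k1 hkq
    have hqd : q ≤ d := Binv_le_d
    have hBq : z ≤ BX X q := Binv_mem (by omega)
    have hBq1 : BX X (q+1) < z := BX_lt_of_Binv_lt hz1 (by omega)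
    have hqb : q ≤ bid X := by
      by_contra hc; push_neg at hc
      rw [BX_eq_zero hc] at hBq; omega
    have hr1 : 1 ≤ r := le_Binv le_rfl hd (by omega)
    have hrq : r ≤ q := Binv_anti (by omega)
    have hBr : z + 1 ≤ BX X r := Binv_mem (by omega)
    have hBr1 : BX X (r+1) < z + 1 := BX_lt_of_Binv_lt (by omega) (by omega)
    have hq1d : q + 1 ≤ d := by omega
    have hmidzero : ∀ j : Fin d, r < (j:ℕ)+1 → (j:ℕ)+1 < q → X.1 j = 0 := by
      intro j h1 h2
      have hrec := BX_rec_fin (X := X) j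
      have ha1' := BX_lt_of_Binv_lt (z := z+1) (by omega) (show r < (j:ℕ)+1 by omega)
      have ha2 : BX X q ≤ BX X ((j:ℕ)+2) := BX_antitone (by omega)
      omega
    have hpA : pA Y = q + 1 := by
      apply pA_eq (by omega) hq1d
      · rw [hgY, if_pos (by omega), gX]
        push_cast; omega
      · intro i h1i h2i
        rw [hgY]
        have hgXi : gX X i = -(BX X i : ℤ) := hgneg i (by omega)
        rw [hgXi]
        have hBi : BX X q ≤ BX X i := BX_antitone (by omega)
        split_ifs <;> omega
    have hentq : ent Y.2 (q+1) = ent X.2 (q+1) := by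
      rw [ent_eq (by omega) hq1d, ent_eq (by omega) hq1d, hY2]
      split_ifs with hif
      · exfalso
        have h2 : q + 1 - 1 + 1 = k := hif
        omega
      · omega
    have hcondM : (ent Y.2 (pA Y) : ℤ) ≤ gX Y (pA Y) := by
      rw [hpA, hentq, hgY, if_pos (by omega), gX]
      have h1 := ent_le_SX (X := X) (m := q+1) (by omega) hq1d
      have hee : ent (X.2 + z • e k) (q+1) = ent Y.2 (q+1) := rfl
      push_cast; omega
    have hCM : clearMinus Y = X.2 := by
      simp only [clearMinus]
      rw [if_pos hcondM, hpA]
      funext j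
      simp only [tauHigh]
      split_ifs with hj
      · rw [hY2 j, if_neg (by omega)]
        omega
      · exact (hX2zero j (by omega)).symm
    have htarget : ∀ p : ℕ, r ≤ p → p < q → BX X q = z →
        tauLow (p:ℤ) X.1 = tauLow ((q:ℤ)-1) X.1 + (BX X q - z) • e q := by
      intro p hp1 hp2 hBqz
      funext j
      simp only [tauLow, Pi.add_apply, Pi.smul_apply, smul_eq_mul, e]
      have hc0 : BX X q - z = 0 := by omega
      rw [hc0]
      simp only [Nat.zero_mul, Nat.add_zero]
      split_ifs with h1 h2 h2
      · rfl
      · omega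
      · exact (hmidzero j (by omega) (by omega)).symm
      · rfl
    rcases le_or_gt (z+1) (BX X q) with hA | hBle
    · -- Subcase A : BX X q ≥ z + 1
      have hrq' : r = q := le_antisymm hrq (le_Binv hq1 hqd hA)
      have hpB : pB Y = q := by
        apply pB_eq hq1 hqd
        · rw [hgY, if_pos hkq, hgneg _ hqb]; omega
        · intro i h1i h2i
          rw [hgY, if_pos (by omega)]
          rcases le_or_gt i (bid X) with hib | hib
          · rw [hgneg _ hib]
            have := BX_lt_of_Binv_lt hz1 (show q < i from h1i)
            omega
          · have := hgnonneg i hib; omega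
      have hcondP : ¬ (gX Y (pB Y) ≤ -(ent Y.1 (pB Y) : ℤ)) := by
        rw [hpB, hgY, if_pos hkq, hgneg _ hqb, hY1]
        have hrec := BX_rec' (X := X) (m := q) hq1 hqd
        push_neg
        omega
      have hCP : clearPlus Y = tauLow ((q:ℤ)-1) X.1 + (BX X q - z) • e q := by
        simp only [clearPlus]
        rw [if_neg hcondP, hpB, hY1]
        funext j
        simp only [Pi.add_apply, Pi.smul_apply, smul_eq_mul]
        have hgq : gX Y q = (z:ℤ) - BX X q := by
          rw [hgY, if_pos hkq, hgneg _ hqb]; ring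
        rw [hgq]
        have htn : (max 0 (-((z:ℤ) - BX X q))).toNat = BX X q - z := by omega
        rw [htn]
      have hbid : bid X' = r := by
        simp only [bid]; rw [hX'1, hCP]
        apply supSupp_eq
        · have hentpos : 0 < ent X.1 q := by
            have hrec := BX_rec' (X := X) (m := q) hq1 hqd
            omega
          obtain ⟨j, hjpos, hjq⟩ := ent_pos_witness hq1 hqd hentpos
          refine ⟨j, ?_, by omega⟩
          simp only [Pi.add_apply, Pi.smul_apply, smul_eq_mul, tauLow, e]
          rw [if_neg (show ¬((((j:ℕ):ℤ))+1 ≤ (q:ℤ)-1) by omega),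
            if_pos (show ((j:ℕ))+1 = q by omega)]
          omega
        · intro j hj
          simp only [Pi.add_apply, Pi.smul_apply, smul_eq_mul, tauLow, e]
          rw [if_neg (show ¬((((j:ℕ):ℤ))+1 ≤ (q:ℤ)-1) by omega),
            if_neg (show ¬(((j:ℕ))+1 = q) by omega)]
          simp
      refine ⟨?_, hbid, ?_⟩
      · rw [hX']
        show (clearPlus Y, clearMinus Y) = _
        rw [hCP, hCM]
      · simp only [ask]; rw [hX'2, hCM]
    · -- Subcase B : BX X q = z
      have hBqz : BX X q = z := by omega
      have hrq2 : r < q := by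
        by_contra hc; push_neg at hc
        have hreq : r = q := le_antisymm hrq hc
        rw [hreq] at hBr; omega
      have hCP : clearPlus Y = tauLow ((q:ℤ)-1) X.1 + (BX X q - z) • e q := by
        rcases le_or_gt k r with hkr | hrk
        · -- B1 : k ≤ r, pB Y = r
          have hpB : pB Y = r := by
            apply pB_eq hr1 (by omega)
            · rw [hgY, if_pos (by omega), hgneg _ (by omega)]; omega
            · intro i h1i h2i
              rw [hgY]
              rcases le_or_gt i (bid X) with hib | hib
              · rw [hgneg _ hib]
                have hBi : BX X i < z + 1 := BX_lt_of_Binv_lt (by omega) h1i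
                have hBp := hBpos i hib
                split_ifs <;> omega
              · have := hgnonneg i hib
                split_ifs <;> omega
          have hcondP : gX Y (pB Y) ≤ -(ent Y.1 (pB Y) : ℤ) := by
            rw [hpB, hgY, if_pos (by omega), hgneg _ (by omega), hY1]
            have hrec := BX_rec' (X := X) (m := r) hr1 (by omega)
            have hge : BX X q ≤ BX X (r+1) := BX_antitone (by omega)
            omega
          simp only [clearPlus]
          rw [if_pos hcondP, hpB, hY1]
          exact htarget r le_rfl hrq2 hBqz
        · -- B2 : r < k, pB Y = k - 1
          have hk2 : 2 ≤ k := by omega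
          have hpB : pB Y = k - 1 := by
            apply pB_eq (by omega) (by omega)
            · rw [hgY, if_neg (by omega), hgneg _ (by omega)]
              have := hBpos (k-1) (by omega); omega
            · intro i h1i h2i
              rw [hgY, if_pos (by omega)]
              rcases le_or_gt i (bid X) with hib | hib
              · rw [hgneg _ hib]
                have hBi : BX X i < z + 1 := BX_lt_of_Binv_lt (by omega) (by omega)
                omega
              · have := hgnonneg i hib; omega
          have hcondP : gX Y (pB Y) ≤ -(ent Y.1 (pB Y) : ℤ) := by
            rw [hpB, hgY, if_neg (by omega), hgneg _ (by omega), hY1]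
            have := ent_le_BX (X := X) (m := k-1) (by omega) (by omega)
            omega
          simp only [clearPlus]
          rw [if_pos hcondP, hpB, hY1]
          have hcast : ((k - 1 : ℕ) : ℤ) = ((k - 1 : ℕ) : ℤ) := rfl
          exact htarget (k-1) (by omega) (by omega) hBqz
      have hbid : bid X' = r := by
        simp only [bid]; rw [hX'1, hCP]
        apply supSupp_eq
        · have hentpos : 0 < ent X.1 r := by
            have hrec := BX_rec' (X := X) (m := r) hr1 (by omega)
            omega
          obtain ⟨j, hjpos, hjr⟩ := ent_pos_witness hr1 (by omega) hentpos
          refine ⟨j, ?_, hjr⟩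
          simp only [Pi.add_apply, Pi.smul_apply, smul_eq_mul, tauLow, e]
          rw [if_pos (show (((j:ℕ):ℤ))+1 ≤ (q:ℤ)-1 by omega)]
          have hc0 : BX X q - z = 0 := by omega
          rw [hc0]
          omega
        · intro j hj
          simp only [Pi.add_apply, Pi.smul_apply, smul_eq_mul, tauLow, e]
          have hc0 : BX X q - z = 0 := by omega
          rw [hc0]
          split_ifs with h1 h2 h2
          · have := hmidzero j (by omega) (by omega); omega
          · have := hmidzero j (by omega) (by omega); omega
          · omega
          · omega
      refine ⟨?_, hbid, ?_⟩
      · rw [hX']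
        show (clearPlus Y, clearMinus Y) = _
        rw [hCP, hCM]
      · simp only [ask]; rw [hX'2, hCM]
  -- assemble
  refine ⟨?_, Ha, Hb, Hc, Hd⟩
  rcases le_or_gt (ask X) k with hak | hka
  · obtain ⟨_, h2, h3⟩ := Ha hak
    show bid X' < ask X'
    rw [h2, h3]; exact hba
  · rcases le_or_gt k (bid X) with hkb | hbk
    · rcases le_or_gt k (Binv X z) with hkB | hBk
      · obtain ⟨_, h2, h3⟩ := Hd hkB
        have hrle : Binv X (z+1) ≤ Binv X z := Binv_anti (by omega)
        have hqb : Binv X z ≤ bid X := by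
          by_contra hc; push_neg at hc
          have h1 : z ≤ BX X (Binv X z) := Binv_mem (by omega)
          rw [BX_eq_zero hc] at h1; omega
        show bid X' < ask X'
        rw [h2, h3]; omega
      · obtain ⟨_, h2, h3⟩ := Hc hBk hkb
        have hlt : Binv X (BX X k + 1) < k := by
          by_contra hc; push_neg at hc
          have h1 := Binv_mem (X := X) (z := BX X k + 1) (by omega)
          have h4 : BX X (Binv X (BX X k + 1)) ≤ BX X k := BX_antitone hc
          omega
        show bid X' < ask X'
        rw [h2, h3]; omega
    · obtain ⟨_, h2, h3⟩ := Hb hbk hka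
      show bid X' < ask X'
      rw [h2, h3]; omega

end OB
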